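/- Let k ≥ 2 and q = 2^(2k-1), and let D = { x^(2^k - 1) + x^(2^k) : x ∈ F_q }. Then there do not exist u, v ∈ D with u + v = 1. -/
import Mathlib

theorem stmt_13 {k : ℕ} (hk : 2 ≤ k) (F : Type*) [Field F] [Fintype F]
    [Algebra (ZMod 2) F] (hcard : Fintype.card F = 2 ^ (2 * k - 1))
    (D : Set F) (hD : D = {u : F | ∃ x : F, u = x ^ (2 ^ k - 1) + x ^ (2 ^ k)}) :
    ¬ ∃ u ∈ D, ∃ v ∈ D, u + v = 1 := by
  have hchar : CharP F 2 := charP_of_injective_ringHom (algebraMap (ZMod 2) F).injective 2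
  have hq : ∀ x : F, x ^ (2 ^ (2 * k - 1)) = x := by
    intro x; rw [← hcard]; exact FiniteField.pow_card x
  -- Frobenius as algebra equivalence
  let φ : F →ₐ[ZMod 2] F :=
    { toRingHom := frobenius F 2
      commutes' := fun c => by
        have hc : c ^ 2 = c := ZMod.pow_card c
        show frobenius F 2 (algebraMap (ZMod 2) F c) = algebraMap (ZMod 2) F c
        rw [frobenius_def, ← map_pow, hc] }
  have hφbij : Function.Bijective φ :=
    (Finite.injective_iff_bijective).mp (φ.toRingHom.injective)
  let e : F ≃ₐ[ZMod 2] F := AlgEquiv.ofBijective φ hφbij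
  set Tr := Algebra.trace (ZMod 2) F with hTrdef
  have trsq : ∀ x : F, Tr (x ^ 2) = Tr x := by
    intro x
    have h := Algebra.trace_eq_of_algEquiv e x
    have hex : e x = x ^ 2 := by
      show φ x = x ^ 2
      simp [φ, frobenius_def]
    rw [hex] at h
    exact h
  have trpow : ∀ (n : ℕ) (x : F), Tr (x ^ 2 ^ n) = Tr x := by
    intro n
    induction n with
    | zero => simp
    | succ n ih =>
        intro x
        rw [pow_succ, pow_mul, trsq, ih]
  -- key identity
  have hx2k : ∀ x : F, x ^ (2 ^ (2 * k) - 1) = x := by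
    intro x
    have h1 : 2 ^ (2 * k) - 1 = 2 ^ (2 * k - 1) + (2 ^ (2 * k - 1) - 1) := by
      have : 2 ^ (2 * k) = 2 * 2 ^ (2 * k - 1) := by
        rw [← pow_succ']
        congr 1
        omega
      have h2 : 1 ≤ 2 ^ (2 * k - 1) := Nat.one_le_two_pow
      omega
    have h2 : 1 ≤ 2 ^ (2 * k - 1) := Nat.one_le_two_pow
    rw [h1, pow_add, hq]
    rw [show x * x ^ (2 ^ (2 * k - 1) - 1) = x ^ (2 ^ (2 * k - 1)) by
      rw [← pow_succ']
      congr 1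
      omega]
    exact hq x
  have key : ∀ x : F, (x ^ (2 ^ k - 1) + x ^ (2 ^ k)) ^ (2 ^ k + 1)
      = x * (1 + x) * (1 + x ^ (2 ^ k)) := by
    intro x
    have ha : 1 ≤ 2 ^ k := Nat.one_le_two_pow
    have hfac : x ^ (2 ^ k - 1) + x ^ (2 ^ k) = x ^ (2 ^ k - 1) * (1 + x) := by
      rw [mul_add, mul_one, ← pow_succ]
      congr 2
      omega
    rw [hfac, pow_add, pow_one, mul_pow, ← pow_mul]
    have hexp : (2 ^ k - 1) * 2 ^ k + (2 ^ k - 1) = 2 ^ (2 * k) - 1 := by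
      have h2k : 2 ^ (2 * k) = 2 ^ k * 2 ^ k := by rw [← pow_add]; congr 1; omega
      have hle : 2 ^ k ≤ 2 ^ k * 2 ^ k := Nat.le_mul_of_pos_left _ (by positivity)
      rw [h2k, Nat.sub_mul, one_mul]
      generalize 2 ^ k * 2 ^ k = m at hle ⊢
      omega
    have hfrob : (1 + x) ^ 2 ^ k = 1 + x ^ 2 ^ k := by
      rw [add_pow_char_pow, one_pow]
    rw [hfrob]
    calc x ^ ((2 ^ k - 1) * 2 ^ k) * (1 + x ^ 2 ^ k) * (x ^ (2 ^ k - 1) * (1 + x))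
        = x ^ ((2 ^ k - 1) * 2 ^ k + (2 ^ k - 1)) * ((1 + x) * (1 + x ^ 2 ^ k)) := by
          rw [pow_add]; ring
      _ = x * ((1 + x) * (1 + x ^ 2 ^ k)) := by rw [hexp, hx2k]
      _ = x * (1 + x) * (1 + x ^ 2 ^ k) := by ring
  -- trace of elements of D to the (2^k+1) power is zero
  have trD : ∀ u ∈ D, Tr (u ^ (2 ^ k + 1)) = 0 := by
    intro u hu
    rw [hD] at hu
    obtain ⟨x, rfl⟩ := hu
    rw [key]
    have hw2 : (x ^ (2 ^ (k - 1) + 1)) ^ 2 = x ^ (2 ^ k + 2) := by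
      rw [← pow_mul]
      congr 1
      have : 2 ^ k = 2 * 2 ^ (k - 1) := by rw [← pow_succ']; congr 1; omega
      omega
    have hwk : (x ^ (2 ^ (k - 1) + 1)) ^ 2 ^ k = x ^ (2 ^ k + 1) := by
      rw [← pow_mul]
      have hexp2 : (2 ^ (k - 1) + 1) * 2 ^ k = 2 ^ (2 * k - 1) + 2 ^ k := by
        rw [add_mul, one_mul, ← pow_add]
        congr 2
        omega
      rw [hexp2, pow_add, hq]
      rw [← pow_succ']
    have hsplit : x * (1 + x) * (1 + x ^ 2 ^ k)
        = x + x ^ 2 + x ^ (2 ^ k + 1) + x ^ (2 ^ k + 2) := by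
      rw [pow_add, pow_add]
      ring
    rw [hsplit]
    have := trsq x
    have h1 := trpow k (x ^ (2 ^ (k - 1) + 1))
    rw [hwk] at h1
    have h2 := trsq (x ^ (2 ^ (k - 1) + 1))
    rw [hw2] at h2
    rw [map_add, map_add, map_add, trsq, h1, h2]
    have h20 : (2 : ZMod 2) = 0 := rfl
    linear_combination (Tr x + Tr (x ^ (2 ^ (k - 1) + 1))) * h20
  -- Tr 1 = 1
  have htr1 : Tr (1 : F) = 1 := by
    have hfr : Module.finrank (ZMod 2) F = 2 * k - 1 := by
      have h := Module.card_eq_pow_finrank (K := ZMod 2) (V := F)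
      rw [hcard, ZMod.card] at h
      exact (Nat.pow_right_injective (le_refl 2) h.symm)
    have h := Algebra.trace_algebraMap (S := F) (1 : ZMod 2)
    rw [map_one] at h
    rw [hTrdef, h, hfr, nsmul_eq_mul, mul_one]
    rw [show 2 * k - 1 = 2 * (k - 1) + 1 by omega]
    push_cast
    rw [show (2 : ZMod 2) = 0 from rfl]
    ring
  rintro ⟨u, hu, v, hv, huv⟩
  have hveq : v = u + 1 := by
    have h2 : (2 : F) = 0 := CharTwo.two_eq_zero
    linear_combination huv - u * h2
  have h1 := trD u hu
  have h2 := trD v hv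
  rw [hveq] at h2
  have hexp : (u + 1) ^ (2 ^ k + 1) = u ^ (2 ^ k + 1) + u ^ 2 ^ k + u + 1 := by
    rw [pow_add, pow_one, add_pow_char_pow, one_pow]
    ring
  rw [hexp, map_add, map_add, map_add, h1, trpow k u, htr1] at h2
  have : Tr u + Tr u = 0 := CharTwo.add_self_eq_zero _
  rw [zero_add] at h2
  -- h2 : Tr u + Tr u + 1 = 0
  rw [this] at h2
  simp at h2
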